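/- The distance Laplacian spectrum of the complement of S_3 ∪ K_2 ∪ (n-5)K_1 (where S_3 is the path/star on 3 vertices) is: n + 3, n + 2, n + 1 each with multiplicity 1, n with multiplicity n - 4, and 0 with multiplicity 1. -/

import Mathlib

open Matrix

/-- The transmission of a vertex: sum of distances to all other vertices. -/
noncomputable def transmission {V : Type*} [Fintype V] (G : SimpleGraph V) (v : V) : ℕ :=
  ∑ u, G.dist v u

/-- The distance Laplacian matrix `D^L(G) = Diag(Tr) - D(G)`. -/
noncomputable def distLapMatrix {V : Type*} [Fintype V] [DecidableEq V]
    (G : SimpleGraph V) : Matrix V V ℝ :=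
  fun u v => if u = v then (transmission G u : ℝ) else -(G.dist u v : ℝ)

/-- `μ` is an eigenvalue of the real matrix `M`. -/
def IsEigenvalue {V : Type*} [Fintype V] [DecidableEq V] (M : Matrix V V ℝ) (μ : ℝ) : Prop :=
  Module.End.HasEigenvalue (Matrix.toLin' M) μ

/-- The multiplicity of `μ` as an eigenvalue of `M` (dimension of the eigenspace). -/
noncomputable def eigMult {V : Type*} [Fintype V] [DecidableEq V]
    (M : Matrix V V ℝ) (μ : ℝ) : ℕ :=
  Module.finrank ℝ (Module.End.eigenspace (Matrix.toLin' M) μ)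

/-- `S_3 ∪ K_2 ∪ (n-5)K_1`: star with center `0`, leaves `1,2`; edge `3-4`;
plus isolated vertices. -/
def s3K2Union (n : ℕ) : SimpleGraph (Fin n) :=
  SimpleGraph.fromRel (fun u v =>
    (u.val = 0 ∧ (v.val = 1 ∨ v.val = 2)) ∨ (u.val = 3 ∧ v.val = 4))

section Aux
variable {n : ℕ}

/-- The pairs at distance 2 in the complement. -/
def spec {n : ℕ} (u v : Fin n) : Prop :=
  u.val = 0 ∧ v.val = 1 ∨ u.val = 0 ∧ v.val = 2 ∨ u.val = 1 ∧ v.val = 0 ∨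
  u.val = 2 ∧ v.val = 0 ∨ u.val = 3 ∧ v.val = 4 ∨ u.val = 4 ∧ v.val = 3

instance (u v : Fin n) : Decidable (spec u v) := by unfold spec; infer_instance

lemma spec_irrefl (u : Fin n) : ¬ spec u u := by unfold spec; omega

lemma adj_compl (u v : Fin n) :
    (s3K2Union n)ᶜ.Adj u v ↔ u ≠ v ∧ ¬ spec u v := by
  rw [SimpleGraph.compl_adj]
  unfold s3K2Union
  rw [SimpleGraph.fromRel_adj]
  unfold spec
  constructor
  · rintro ⟨h1, h2⟩; exact ⟨h1, fun hs => h2 ⟨h1, by omega⟩⟩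
  · rintro ⟨h1, h2⟩; exact ⟨h1, fun ⟨_, hs⟩ => h2 (by omega)⟩

lemma spec_lt {u v : Fin n} (h : spec u v) : u.val ≤ 4 ∧ v.val ≤ 4 := by
  unfold spec at h; omega

lemma dist_compl (hn : 6 ≤ n) (u v : Fin n) (huv : u ≠ v) :
    (s3K2Union n)ᶜ.dist u v = if spec u v then 2 else 1 := by
  by_cases hs : spec u v
  · simp only [hs, if_true]
    set G := (s3K2Union n)ᶜ
    set w : Fin n := ⟨5, by omega⟩ with hw
    have hu4 := (spec_lt hs).1
    have hv4 := (spec_lt hs).2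
    have hwv : w.val = 5 := rfl
    have h1 : G.Adj u w := (adj_compl u w).2
      ⟨by intro h; rw [h] at hu4; omega, by unfold spec; omega⟩
    have h2 : G.Adj w v := (adj_compl w v).2
      ⟨by intro h; rw [← h] at hv4; omega, by unfold spec; omega⟩
    have hle : G.dist u v ≤ 2 := by
      have := SimpleGraph.dist_le (h1.toWalk.append h2.toWalk)
      simpa using this
    have hne1 : G.dist u v ≠ 1 := by
      intro h
      exact ((adj_compl u v).1 (SimpleGraph.dist_eq_one_iff_adj.1 h)).2 hs
    have hne0 : G.dist u v ≠ 0 := by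
      intro h
      rcases SimpleGraph.dist_eq_zero_iff_eq_or_not_reachable.1 h with h' | h'
      · exact huv h'
      · exact h' ⟨h1.toWalk.append h2.toWalk⟩
    omega
  · simp only [hs, if_false]
    rw [SimpleGraph.dist_eq_one_iff_adj, adj_compl]
    exact ⟨huv, hs⟩

lemma specSum (hn : 6 ≤ n) (u : Fin n) (x : Fin n → ℝ) :
    ∑ v, (if spec u v then x v else 0) =
      if u.val = 0 then x ⟨1, by omega⟩ + x ⟨2, by omega⟩
      else if u.val = 1 then x ⟨0, by omega⟩
      else if u.val = 2 then x ⟨0, by omega⟩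
      else if u.val = 3 then x ⟨4, by omega⟩
      else if u.val = 4 then x ⟨3, by omega⟩
      else 0 := by
  rw [← Finset.sum_filter]
  rcases Nat.lt_or_ge u.val 5 with h5 | h5
  · interval_cases h : u.val
    · have : Finset.univ.filter (fun v => spec u v) =
          {(⟨1, by omega⟩ : Fin n), ⟨2, by omega⟩} := by
        ext v; rw [Finset.mem_filter]; simp [spec, Fin.ext_iff]; omega
      rw [this, Finset.sum_pair (by simp [Fin.ext_iff])]
      simp [h]
    · have : Finset.univ.filter (fun v => spec u v) = {(⟨0, by omega⟩ : Fin n)} := by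
        ext v; rw [Finset.mem_filter]; simp [spec, Fin.ext_iff]; omega
      rw [this, Finset.sum_singleton]
      simp [h]
    · have : Finset.univ.filter (fun v => spec u v) = {(⟨0, by omega⟩ : Fin n)} := by
        ext v; rw [Finset.mem_filter]; simp [spec, Fin.ext_iff]; omega
      rw [this, Finset.sum_singleton]
      simp [h]
    · have : Finset.univ.filter (fun v => spec u v) = {(⟨4, by omega⟩ : Fin n)} := by
        ext v; rw [Finset.mem_filter]; simp [spec, Fin.ext_iff]; omega
      rw [this, Finset.sum_singleton]
      simp [h]
    · have : Finset.univ.filter (fun v => spec u v) = {(⟨3, by omega⟩ : Fin n)} := by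
        ext v; rw [Finset.mem_filter]; simp [spec, Fin.ext_iff]; omega
      rw [this, Finset.sum_singleton]
      simp [h]
  · have : Finset.univ.filter (fun v => spec u v) = ∅ := by
      ext v; rw [Finset.mem_filter]; simp [spec, Fin.ext_iff]; omega
    rw [this, Finset.sum_empty]
    have h0 : ¬ u.val = 0 := by omega
    have h1 : ¬ u.val = 1 := by omega
    have h2 : ¬ u.val = 2 := by omega
    have h3 : ¬ u.val = 3 := by omega
    have h4 : ¬ u.val = 4 := by omega
    simp [h0, h1, h2, h3, h4]

/-- Diagonal correction values. -/
noncomputable def sv {n : ℕ} (u : Fin n) : ℝ :=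
  if u.val = 0 then 2 else if u.val ≤ 4 then 1 else 0

lemma transmission_cast (hn : 6 ≤ n) (u : Fin n) :
    ((transmission (s3K2Union n)ᶜ u : ℕ) : ℝ) = n - 1 + sv u := by
  unfold transmission
  push_cast
  have hpt : ∀ v : Fin n, ((s3K2Union n)ᶜ.dist u v : ℝ) =
      (1 - if v = u then 1 else 0) + (if spec u v then 1 else 0) := by
    intro v
    by_cases hv : v = u
    · subst hv
      simp [SimpleGraph.dist_self, spec_irrefl]
    · rw [dist_compl hn u v (Ne.symm hv), if_neg hv]
      by_cases hs : spec u v <;> simp [hs] <;> norm_num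
  rw [Finset.sum_congr rfl (fun v _ => hpt v), Finset.sum_add_distrib,
    Finset.sum_sub_distrib, Finset.sum_ite_eq' Finset.univ, specSum hn]
  simp only [Finset.sum_const, Finset.card_univ, Fintype.card_fin, if_pos (Finset.mem_univ u),
    nsmul_eq_mul, mul_one]
  unfold sv
  rcases Nat.lt_or_ge u.val 5 with h5 | h5
  · interval_cases h : u.val <;> simp [h] <;> ring
  · have h0 : ¬ u.val = 0 := by omega
    have h1 : ¬ u.val = 1 := by omega
    have h2 : ¬ u.val = 2 := by omega
    have h3 : ¬ u.val = 3 := by omega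
    have h4 : ¬ u.val = 4 := by omega
    have h5' : ¬ u.val ≤ 4 := by omega
    simp [h0, h1, h2, h3, h4, h5']

/-- master formula for the distance Laplacian acting on a vector -/
lemma mulVec_formula (hn : 6 ≤ n) (M : Matrix (Fin n) (Fin n) ℝ)
    (hM : M = distLapMatrix (s3K2Union n)ᶜ) (x : Fin n → ℝ) (u : Fin n) :
    M.mulVec x u = n * x u - (∑ v, x v) + sv u * x u - ∑ v, (if spec u v then x v else 0) := by
  have hentry : ∀ v : Fin n, M u v =
      (n : ℝ) * (if v = u then 1 else 0) - 1 + sv u * (if v = u then 1 else 0)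
        - (if spec u v then 1 else 0) := by
    intro v
    rw [hM]
    unfold distLapMatrix
    by_cases hv : v = u
    · subst hv
      rw [if_pos rfl]
      rw [if_neg (spec_irrefl v), if_pos rfl, transmission_cast hn]
      ring
    · rw [if_neg (Ne.symm hv), if_neg hv, dist_compl hn u v (Ne.symm hv)]
      by_cases hs : spec u v <;> simp [hs] <;> norm_num
  have hmv : M.mulVec x u = ∑ v, M u v * x v := rfl
  rw [hmv]
  rw [Finset.sum_congr rfl (fun v _ => by rw [hentry v])]
  have expand : ∀ v : Fin n,
      ((n : ℝ) * (if v = u then 1 else 0) - 1 + sv u * (if v = u then 1 else 0)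
        - (if spec u v then 1 else 0)) * x v =
      (n : ℝ) * (if v = u then x v else 0) - x v + sv u * (if v = u then x v else 0)
        - (if spec u v then x v else 0) := by
    intro v
    by_cases hv : v = u
    · subst hv; simp [spec_irrefl]; ring
    · by_cases hs : spec u v <;> simp [hv, hs] <;> ring
  rw [Finset.sum_congr rfl (fun v _ => expand v)]
  rw [Finset.sum_sub_distrib, Finset.sum_add_distrib, Finset.sum_sub_distrib,
    ← Finset.mul_sum, ← Finset.mul_sum, Finset.sum_ite_eq' Finset.univ]
  simp only [if_pos (Finset.mem_univ u)]

/-- Sum of a vector supported on coordinates `0..4` and `k`. -/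
lemma sum_of_vals (hn : 6 ≤ n) (x : Fin n → ℝ) (c0 c1 c2 c3 c4 ck : ℝ)
    (k : ℕ) (hk : 5 ≤ k) (hkn : k < n)
    (h : ∀ v : Fin n, x v = if v.val = 0 then c0 else if v.val = 1 then c1
      else if v.val = 2 then c2 else if v.val = 3 then c3 else if v.val = 4 then c4
      else if v.val = k then ck else 0) :
    ∑ v, x v = c0 + c1 + c2 + c3 + c4 + ck := by
  have h' : ∀ v : Fin n, x v =
      c0 * (if v = (⟨0, by omega⟩ : Fin n) then 1 else 0) +
      c1 * (if v = (⟨1, by omega⟩ : Fin n) then 1 else 0) +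
      c2 * (if v = (⟨2, by omega⟩ : Fin n) then 1 else 0) +
      c3 * (if v = (⟨3, by omega⟩ : Fin n) then 1 else 0) +
      c4 * (if v = (⟨4, by omega⟩ : Fin n) then 1 else 0) +
      ck * (if v = (⟨k, hkn⟩ : Fin n) then 1 else 0) := by
    intro v
    rw [h v]
    simp only [Fin.ext_iff]
    rcases Nat.lt_or_ge v.val 5 with h5 | h5
    · have hknv : ¬ (v.val = k) := by omega
      simp only [hknv, if_false]
      interval_cases hv : v.val <;> simp
    · have h0 : ¬ v.val = 0 := by omega
      have h1 : ¬ v.val = 1 := by omega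
      have h2 : ¬ v.val = 2 := by omega
      have h3 : ¬ v.val = 3 := by omega
      have h4 : ¬ v.val = 4 := by omega
      by_cases hvk : v.val = k <;>
        simp [h0, h1, h2, h3, h4, hvk, show ¬ k = 0 by omega, show ¬ k = 1 by omega,
          show ¬ k = 2 by omega, show ¬ k = 3 by omega, show ¬ k = 4 by omega]
  rw [Finset.sum_congr rfl (fun v _ => h' v)]
  repeat rw [Finset.sum_add_distrib]
  repeat rw [← Finset.mul_sum]
  repeat rw [Finset.sum_ite_eq' Finset.univ]
  simp

end Aux

/-- eigenvector for `n+3`. -/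
noncomputable def v3V (n : ℕ) : Fin n → ℝ :=
  fun u => if u.val = 0 then 2 else if u.val = 1 then -1 else if u.val = 2 then -1 else 0

/-- eigenvector for `n+1`. -/
noncomputable def v1V (n : ℕ) : Fin n → ℝ :=
  fun u => if u.val = 1 then 1 else if u.val = 2 then -1 else 0

/-- eigenvector for `n+2`. -/
noncomputable def v2V (n : ℕ) : Fin n → ℝ :=
  fun u => if u.val = 3 then 1 else if u.val = 4 then -1 else 0

/-- eigenvector for `n`, supported on the two nontrivial components. -/
noncomputable def aVec (n : ℕ) : Fin n → ℝ :=
  fun u => if u.val ≤ 2 then 2 else if u.val ≤ 4 then -3 else 0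

/-- eigenvectors for `n`, supported on `{0,1,2}` and one isolated vertex `k ≥ 5`. -/
noncomputable def bVec (n : ℕ) (k : ℕ) : Fin n → ℝ :=
  fun u => if u.val ≤ 2 then -1 else if u.val = k then 3 else 0

section Eig
variable {n : ℕ}

lemma sum_v3V (hn : 6 ≤ n) : ∑ v, v3V n v = 0 := by
  rw [sum_of_vals hn _ 2 (-1) (-1) 0 0 0 5 (by omega) (by omega)
    (fun v => by unfold v3V; split_ifs <;> first | rfl | omega)]
  ring

lemma sum_v1V (hn : 6 ≤ n) : ∑ v, v1V n v = 0 := by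
  rw [sum_of_vals hn _ 0 1 (-1) 0 0 0 5 (by omega) (by omega)
    (fun v => by unfold v1V; split_ifs <;> first | rfl | omega)]
  ring

lemma sum_v2V (hn : 6 ≤ n) : ∑ v, v2V n v = 0 := by
  rw [sum_of_vals hn _ 0 0 0 1 (-1) 0 5 (by omega) (by omega)
    (fun v => by unfold v2V; split_ifs <;> first | rfl | omega)]
  ring

lemma sum_aVec (hn : 6 ≤ n) : ∑ v, aVec n v = 0 := by
  rw [sum_of_vals hn _ 2 2 2 (-3) (-3) 0 5 (by omega) (by omega)
    (fun v => by unfold aVec; split_ifs <;> first | rfl | omega)]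
  ring

lemma sum_bVec (hn : 6 ≤ n) (k : ℕ) (hk : 5 ≤ k) (hkn : k < n) :
    ∑ v, bVec n k v = 0 := by
  rw [sum_of_vals hn _ (-1) (-1) (-1) 0 0 3 k hk hkn
    (fun v => by unfold bVec; split_ifs <;> first | rfl | omega)]
  ring

lemma mulVec_ones (hn : 6 ≤ n) (M : Matrix (Fin n) (Fin n) ℝ)
    (hM : M = distLapMatrix (s3K2Union n)ᶜ) :
    M.mulVec (fun _ => (1 : ℝ)) = 0 := by
  funext u
  rw [mulVec_formula hn M hM, specSum hn]
  have hsum : ∑ _v : Fin n, (1 : ℝ) = n := by simp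
  rw [hsum]
  unfold sv
  rcases Nat.lt_or_ge u.val 5 with h5 | h5
  · interval_cases h : u.val <;> simp [h] <;> ring
  · have h0 : ¬ u.val = 0 := by omega
    have h4' : ¬ u.val ≤ 4 := by omega
    simp [h0, show ¬ u.val = 1 by omega, show ¬ u.val = 2 by omega,
      show ¬ u.val = 3 by omega, show ¬ u.val = 4 by omega, h4']

lemma mulVec_v3V (hn : 6 ≤ n) (M : Matrix (Fin n) (Fin n) ℝ)
    (hM : M = distLapMatrix (s3K2Union n)ᶜ) :
    M.mulVec (v3V n) = ((n : ℝ) + 3) • v3V n := by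
  funext u
  rw [mulVec_formula hn M hM, specSum hn, sum_v3V hn]
  simp only [Pi.smul_apply, smul_eq_mul]
  unfold sv v3V
  rcases Nat.lt_or_ge u.val 5 with h5 | h5
  · interval_cases h : u.val <;> norm_num [h] <;> ring
  · have h0 : ¬ u.val = 0 := by omega
    have h4' : ¬ u.val ≤ 4 := by omega
    simp [h0, show ¬ u.val = 1 by omega, show ¬ u.val = 2 by omega,
      show ¬ u.val = 3 by omega, show ¬ u.val = 4 by omega, h4']

lemma mulVec_v1V (hn : 6 ≤ n) (M : Matrix (Fin n) (Fin n) ℝ)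
    (hM : M = distLapMatrix (s3K2Union n)ᶜ) :
    M.mulVec (v1V n) = ((n : ℝ) + 1) • v1V n := by
  funext u
  rw [mulVec_formula hn M hM, specSum hn, sum_v1V hn]
  simp only [Pi.smul_apply, smul_eq_mul]
  unfold sv v1V
  rcases Nat.lt_or_ge u.val 5 with h5 | h5
  · interval_cases h : u.val <;> norm_num [h] <;> ring
  · have h0 : ¬ u.val = 0 := by omega
    have h4' : ¬ u.val ≤ 4 := by omega
    simp [h0, show ¬ u.val = 1 by omega, show ¬ u.val = 2 by omega,
      show ¬ u.val = 3 by omega, show ¬ u.val = 4 by omega, h4']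

lemma mulVec_v2V (hn : 6 ≤ n) (M : Matrix (Fin n) (Fin n) ℝ)
    (hM : M = distLapMatrix (s3K2Union n)ᶜ) :
    M.mulVec (v2V n) = ((n : ℝ) + 2) • v2V n := by
  funext u
  rw [mulVec_formula hn M hM, specSum hn, sum_v2V hn]
  simp only [Pi.smul_apply, smul_eq_mul]
  unfold sv v2V
  rcases Nat.lt_or_ge u.val 5 with h5 | h5
  · interval_cases h : u.val <;> norm_num [h] <;> ring
  · have h0 : ¬ u.val = 0 := by omega
    have h4' : ¬ u.val ≤ 4 := by omega
    simp [h0, show ¬ u.val = 1 by omega, show ¬ u.val = 2 by omega,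
      show ¬ u.val = 3 by omega, show ¬ u.val = 4 by omega, h4']

lemma mulVec_aVec (hn : 6 ≤ n) (M : Matrix (Fin n) (Fin n) ℝ)
    (hM : M = distLapMatrix (s3K2Union n)ᶜ) :
    M.mulVec (aVec n) = (n : ℝ) • aVec n := by
  funext u
  rw [mulVec_formula hn M hM, specSum hn, sum_aVec hn]
  simp only [Pi.smul_apply, smul_eq_mul]
  unfold sv aVec
  rcases Nat.lt_or_ge u.val 5 with h5 | h5
  · interval_cases h : u.val <;> norm_num [h] <;> ring
  · have h0 : ¬ u.val = 0 := by omega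
    have h4' : ¬ u.val ≤ 4 := by omega
    simp [h0, show ¬ u.val = 1 by omega, show ¬ u.val = 2 by omega,
      show ¬ u.val = 3 by omega, show ¬ u.val = 4 by omega, h4',
      show ¬ u.val ≤ 2 by omega]

lemma mulVec_bVec (hn : 6 ≤ n) (M : Matrix (Fin n) (Fin n) ℝ)
    (hM : M = distLapMatrix (s3K2Union n)ᶜ) (k : ℕ) (hk : 5 ≤ k) (hkn : k < n) :
    M.mulVec (bVec n k) = (n : ℝ) • bVec n k := by
  funext u
  rw [mulVec_formula hn M hM, specSum hn, sum_bVec hn k hk hkn]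
  simp only [Pi.smul_apply, smul_eq_mul]
  unfold sv bVec
  rcases Nat.lt_or_ge u.val 5 with h5 | h5
  · interval_cases h : u.val <;>
      norm_num [h, show ¬ u.val = k by omega, show ¬ (1 : ℕ) = k by omega,
        show ¬ (2 : ℕ) = k by omega, show ¬ (0 : ℕ) = k by omega,
        show ¬ (3 : ℕ) = k by omega, show ¬ (4 : ℕ) = k by omega] <;> ring
  · have h0 : ¬ u.val = 0 := by omega
    have h4' : ¬ u.val ≤ 4 := by omega
    by_cases hvk : u.val = k <;>
      simp [h0, show ¬ u.val = 1 by omega, show ¬ u.val = 2 by omega,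
        show ¬ u.val = 3 by omega, show ¬ u.val = 4 by omega, h4',
        show ¬ u.val ≤ 2 by omega, hvk, show ¬ k ≤ 2 by omega, show ¬ k ≤ 4 by omega,
        show ¬ k = 0 by omega, show ¬ k = 1 by omega, show ¬ k = 2 by omega,
        show ¬ k = 3 by omega, show ¬ k = 4 by omega]

end Eig

/-- family of `n - 4` eigenvectors for eigenvalue `n`. -/
noncomputable def wFam (n : ℕ) : Fin (n - 4) → (Fin n → ℝ) :=
  fun i => if i.val = 0 then aVec n else bVec n (i.val + 4)

section WFam
variable {n : ℕ}

lemma mulVec_wFam (hn : 6 ≤ n) (M : Matrix (Fin n) (Fin n) ℝ)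
    (hM : M = distLapMatrix (s3K2Union n)ᶜ) (i : Fin (n - 4)) :
    M.mulVec (wFam n i) = (n : ℝ) • wFam n i := by
  unfold wFam
  by_cases h : i.val = 0
  · simp only [h, if_pos rfl]
    exact mulVec_aVec hn M hM
  · simp only [h, if_neg h]
    exact mulVec_bVec hn M hM (i.val + 4) (by omega) (by have := i.isLt; omega)

lemma wFam_indep (hn : 6 ≤ n) : LinearIndependent ℝ (wFam n) := by
  rw [Fintype.linearIndependent_iff]
  intro g hg i
  by_cases hi : i.val = 0
  · have h3 := congr_fun hg (⟨3, by omega⟩ : Fin n)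
    rw [Finset.sum_apply] at h3
    have hpt : ∀ j : Fin (n - 4), (g j • wFam n j) (⟨3, by omega⟩ : Fin n)
        = if j = i then (-3) * g j else 0 := by
      intro j
      simp only [Pi.smul_apply, smul_eq_mul]
      unfold wFam aVec bVec
      by_cases hji : j = i
      · subst hji
        simp [hi, show ¬ ((3:ℕ) ≤ 2) by omega, show ((3:ℕ) ≤ 4) by omega]
        ring
      · have hj0 : ¬ (j.val = 0) := fun h => hji (Fin.ext (by omega))
        simp [hj0, hji, show ¬ ((3:ℕ) ≤ 2) by omega, show ¬ ((3:ℕ) = j.val + 4) by omega,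
          show ¬ ((3:ℕ) = 4 + j.val) by omega]
    rw [Finset.sum_congr rfl (fun j _ => hpt j), Finset.sum_ite_eq' Finset.univ] at h3
    simp only [if_pos (Finset.mem_univ i), Pi.zero_apply] at h3
    linarith
  · have hlt : i.val + 4 < n := by have := i.isLt; omega
    have h3 := congr_fun hg (⟨i.val + 4, hlt⟩ : Fin n)
    rw [Finset.sum_apply] at h3
    have hpt : ∀ j : Fin (n - 4), (g j • wFam n j) (⟨i.val + 4, hlt⟩ : Fin n)
        = if j = i then 3 * g j else 0 := by
      intro j
      simp only [Pi.smul_apply, smul_eq_mul]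
      unfold wFam aVec bVec
      by_cases hji : j = i
      · subst hji
        simp [hi, show ¬ (j.val + 4 ≤ 2) by omega]
        ring
      · by_cases hj : j.val = 0
        · simp [hj, hji, show ¬ (i.val + 4 ≤ 2) by omega, show ¬ (i.val + 4 ≤ 4) by omega]
        · have hvv : ¬ (i.val + 4 = j.val + 4) := fun h => hji (Fin.ext (by omega))
          have hvv' : ¬ (4 + i.val = 4 + j.val) := fun h => hji (Fin.ext (by omega))
          simp [hj, hji, show ¬ (i.val + 4 ≤ 2) by omega, hvv, hvv',
              show ¬ (i.val = j.val) from fun h => hji (Fin.ext h.symm)]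
    rw [Finset.sum_congr rfl (fun j _ => hpt j), Finset.sum_ite_eq' Finset.univ] at h3
    simp only [if_pos (Finset.mem_univ i), Pi.zero_apply] at h3
    linarith

lemma one_le_finrank_of_mem {x : Fin n → ℝ} {p : Submodule ℝ (Fin n → ℝ)}
    (hx : x ∈ p) (hx0 : x ≠ 0) : 1 ≤ Module.finrank ℝ p := by
  rw [Nat.one_le_iff_ne_zero]
  intro h
  rw [Submodule.finrank_eq_zero] at h
  rw [h, Submodule.mem_bot] at hx
  exact hx0 hx

lemma frk_sup {s t : Submodule ℝ (Fin n → ℝ)} (h : Disjoint s t) :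
    Module.finrank ℝ ↥(s ⊔ t) = Module.finrank ℝ s + Module.finrank ℝ t := by
  have h2 := Submodule.finrank_sup_add_finrank_inf_eq s t
  rw [h.eq_bot, finrank_bot, add_zero] at h2
  exact h2

end WFam

theorem stmt_16 (n : ℕ) (hn : 6 ≤ n)
    (M : Matrix (Fin n) (Fin n) ℝ) (hM : M = distLapMatrix (s3K2Union n)ᶜ) :
    eigMult M ((n : ℝ) + 3) = 1 ∧
    eigMult M ((n : ℝ) + 2) = 1 ∧
    eigMult M ((n : ℝ) + 1) = 1 ∧
    eigMult M (n : ℝ) = n - 4 ∧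
    eigMult M 0 = 1 ∧
    (∀ μ : ℝ, IsEigenvalue M μ →
      μ = 0 ∨ μ = (n : ℝ) ∨ μ = (n : ℝ) + 1 ∨ μ = (n : ℝ) + 2 ∨ μ = (n : ℝ) + 3) := by
  classical
  set f := Matrix.toLin' M with hf
  set E : ℝ → Submodule ℝ (Fin n → ℝ) := fun μ => Module.End.eigenspace f μ with hEdef
  have hmem : ∀ (x : Fin n → ℝ) (μ : ℝ), M.mulVec x = μ • x → x ∈ E μ := by
    intro x μ h
    rw [hEdef]
    rw [Module.End.mem_eigenspace_iff, hf, Matrix.toLin'_apply, h]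
  have hn' : (6:ℝ) ≤ (n:ℝ) := by exact_mod_cast hn
  -- memberships
  have m0 : (fun _ => (1:ℝ)) ∈ E 0 :=
    hmem _ _ ((mulVec_ones hn M hM).trans (zero_smul ℝ _).symm)
  have m3 : v3V n ∈ E ((n:ℝ)+3) := hmem _ _ (mulVec_v3V hn M hM)
  have m1 : v1V n ∈ E ((n:ℝ)+1) := hmem _ _ (mulVec_v1V hn M hM)
  have m2 : v2V n ∈ E ((n:ℝ)+2) := hmem _ _ (mulVec_v2V hn M hM)
  have mw : ∀ i, wFam n i ∈ E (n:ℝ) := fun i => hmem _ _ (mulVec_wFam hn M hM i)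
  -- nonzeroness
  have nz0 : (fun _ : Fin n => (1:ℝ)) ≠ (0 : Fin n → ℝ) := by
    intro h; have := congr_fun h ⟨0, by omega⟩; norm_num at this
  have nz3 : v3V n ≠ 0 := by
    intro h; have := congr_fun h ⟨0, by omega⟩; norm_num [v3V] at this
  have nz1 : v1V n ≠ 0 := by
    intro h; have := congr_fun h ⟨1, by omega⟩; norm_num [v1V] at this
  have nz2 : v2V n ≠ 0 := by
    intro h; have := congr_fun h ⟨3, by omega⟩; norm_num [v2V] at this
  -- lower bounds
  have lb0 : 1 ≤ Module.finrank ℝ (E 0) := one_le_finrank_of_mem m0 nz0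
  have lb3 : 1 ≤ Module.finrank ℝ (E ((n:ℝ)+3)) := one_le_finrank_of_mem m3 nz3
  have lb1 : 1 ≤ Module.finrank ℝ (E ((n:ℝ)+1)) := one_le_finrank_of_mem m1 nz1
  have lb2 : 1 ≤ Module.finrank ℝ (E ((n:ℝ)+2)) := one_le_finrank_of_mem m2 nz2
  have lbw : n - 4 ≤ Module.finrank ℝ (E (n:ℝ)) := by
    have hFi : LinearIndependent ℝ (fun i : Fin (n-4) => (⟨wFam n i, mw i⟩ : E (n:ℝ))) := by
      apply LinearIndependent.of_comp (E (n:ℝ)).subtype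
      exact wFam_indep hn
    simpa using hFi.fintype_card_le_finrank
  -- independence machinery
  have hind := Module.End.eigenspaces_iSupIndep f
  have hle : ∀ (μ ν : ℝ), ν ≠ μ →
      E ν ≤ ⨆ (j) (_ : j ≠ μ), Module.End.eigenspace f j := by
    intro μ ν hν
    exact le_iSup₂ (f := fun (j : ℝ) (_ : j ≠ μ) => Module.End.eigenspace f j) ν hν
  have hdisj : ∀ (μ : ℝ) (S : Submodule ℝ (Fin n → ℝ)),
      S ≤ (⨆ (j) (_ : j ≠ μ), Module.End.eigenspace f j) → Disjoint (E μ) S :=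
    fun μ S hS => (hind μ).mono_right hS
  -- distinctness
  have e1 : (0:ℝ) ≠ (n:ℝ) := ne_of_lt (by linarith)
  have e2 : (0:ℝ) ≠ (n:ℝ)+1 := ne_of_lt (by linarith)
  have e3 : (0:ℝ) ≠ (n:ℝ)+2 := ne_of_lt (by linarith)
  have e4 : (0:ℝ) ≠ (n:ℝ)+3 := ne_of_lt (by linarith)
  have e5 : (n:ℝ) ≠ (n:ℝ)+1 := ne_of_lt (by linarith)
  have e6 : (n:ℝ) ≠ (n:ℝ)+2 := ne_of_lt (by linarith)
  have e7 : (n:ℝ) ≠ (n:ℝ)+3 := ne_of_lt (by linarith)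
  have e8 : (n:ℝ)+1 ≠ (n:ℝ)+2 := ne_of_lt (by linarith)
  have e9 : (n:ℝ)+1 ≠ (n:ℝ)+3 := ne_of_lt (by linarith)
  have e10 : (n:ℝ)+2 ≠ (n:ℝ)+3 := ne_of_lt (by linarith)
  -- the chain of sups
  set S2 := E (n:ℝ) ⊔ E 0 with hS2
  set S3 := E ((n:ℝ)+1) ⊔ S2 with hS3
  set S4 := E ((n:ℝ)+2) ⊔ S3 with hS4
  set S5 := E ((n:ℝ)+3) ⊔ S4 with hS5
  have dn : Disjoint (E (n:ℝ)) (E 0) := hdisj _ _ (hle _ _ e1)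
  have dn1 : Disjoint (E ((n:ℝ)+1)) S2 :=
    hdisj _ _ (sup_le (hle _ _ e5) (hle _ _ e2))
  have dn2 : Disjoint (E ((n:ℝ)+2)) S3 :=
    hdisj _ _ (sup_le (hle _ _ e8) (sup_le (hle _ _ e6) (hle _ _ e3)))
  have dn3 : Disjoint (E ((n:ℝ)+3)) S4 :=
    hdisj _ _ (sup_le (hle _ _ e10)
      (sup_le (hle _ _ e9) (sup_le (hle _ _ e7) (hle _ _ e4))))
  have fr2 : Module.finrank ℝ S2 = Module.finrank ℝ (E (n:ℝ)) + Module.finrank ℝ (E 0) :=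
    frk_sup dn
  have fr3 : Module.finrank ℝ S3 = Module.finrank ℝ (E ((n:ℝ)+1)) + Module.finrank ℝ S2 :=
    frk_sup dn1
  have fr4 : Module.finrank ℝ S4 = Module.finrank ℝ (E ((n:ℝ)+2)) + Module.finrank ℝ S3 :=
    frk_sup dn2
  have fr5 : Module.finrank ℝ S5 = Module.finrank ℝ (E ((n:ℝ)+3)) + Module.finrank ℝ S4 :=
    frk_sup dn3
  have hfull : Module.finrank ℝ (Fin n → ℝ) = n := by
    rw [Module.finrank_fintype_fun_eq_card, Fintype.card_fin]
  have hS5le : Module.finrank ℝ S5 ≤ n :=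
    le_trans (Submodule.finrank_le S5) (le_of_eq hfull)
  have key : Module.finrank ℝ (E ((n:ℝ)+3)) = 1 ∧ Module.finrank ℝ (E ((n:ℝ)+2)) = 1 ∧
      Module.finrank ℝ (E ((n:ℝ)+1)) = 1 ∧ Module.finrank ℝ (E (n:ℝ)) = n - 4 ∧
      Module.finrank ℝ (E 0) = 1 ∧ Module.finrank ℝ S5 = n := by
    rw [fr5, fr4, fr3, fr2] at hS5le ⊢
    omega
  have hrfl3 : eigMult M ((n:ℝ)+3) = Module.finrank ℝ (E ((n:ℝ)+3)) := rfl
  have hrfl2 : eigMult M ((n:ℝ)+2) = Module.finrank ℝ (E ((n:ℝ)+2)) := rfl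
  have hrfl1 : eigMult M ((n:ℝ)+1) = Module.finrank ℝ (E ((n:ℝ)+1)) := rfl
  have hrfln : eigMult M (n:ℝ) = Module.finrank ℝ (E (n:ℝ)) := rfl
  have hrfl0 : eigMult M 0 = Module.finrank ℝ (E 0) := rfl
  refine ⟨hrfl3.trans key.1, hrfl2.trans key.2.1, hrfl1.trans key.2.2.1,
    hrfln.trans key.2.2.2.1, hrfl0.trans key.2.2.2.2.1, ?_⟩
  -- no other eigenvalues
  intro μ hμ
  by_contra hcon
  push_neg at hcon
  obtain ⟨h1, h2, h3, h4, h5⟩ := hcon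
  have hd : Disjoint (E μ) S5 :=
    hdisj _ _ (sup_le (hle _ _ (Ne.symm h5)) (sup_le (hle _ _ (Ne.symm h4))
      (sup_le (hle _ _ (Ne.symm h3)) (sup_le (hle _ _ (Ne.symm h2)) (hle _ _ (Ne.symm h1))))))
  have hS5top : S5 = ⊤ :=
    Submodule.eq_top_of_finrank_eq (by rw [key.2.2.2.2.2, hfull])
  rw [hS5top, disjoint_top] at hd
  have hne : E μ ≠ ⊥ := Module.End.hasEigenvalue_iff.mp hμ
  exact hne hd
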